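/- Let R = D·V with V invertible upper triangular and R reduced, all over Z/2Z. Suppose column j of R is nonzero with pivot i, and let R' be obtained from R by adding to column j a linear combination of columns of R whose pivots are all strictly less than i. Then column j of R' is nonzero with pivot i, and if R' is reduced then R' has the same pivot pairing as R. -/

import Mathlib

open Matrix

/-- `i` is the pivot of column `j` of `M`. -/
def IsPivot {m : ℕ} (M : Matrix (Fin m) (Fin m) (ZMod 2)) (i j : Fin m) : Prop :=
  M i j ≠ 0 ∧ ∀ i' : Fin m, i < i' → M i' j = 0

/-- `M` is reduced: all nonzero columns have pairwise distinct pivots. -/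
def Reduced {m : ℕ} (M : Matrix (Fin m) (Fin m) (ZMod 2)) : Prop :=
  ∀ i j j' : Fin m, IsPivot M i j → IsPivot M i j' → j = j'

lemma pivot_unique {m : ℕ} {M : Matrix (Fin m) (Fin m) (ZMod 2)} {p i j : Fin m}
    (hp : IsPivot M p j) (hi : IsPivot M i j) : p = i := by
  rcases lt_trichotomy p i with h | h | h
  · exact absurd (hp.2 i h) hi.1
  · exact h
  · exact absurd (hi.2 p h) hp.1

/-- Adding to a column of a reduced matrix a linear combination of columns
whose pivots lie strictly above its own pivot does not change its pivot;
if the result is still reduced, its pivot pairing agrees with the original. -/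
theorem add_lower_pivot_columns_preserves_pivot {m : ℕ}
    (D V R : Matrix (Fin m) (Fin m) (ZMod 2))
    (hVu : IsUnit V) (hVt : V.BlockTriangular id)
    (hR : R = D * V) (hred : Reduced R)
    (i j : Fin m) (hpiv : IsPivot R i j)
    (c : Fin m → ZMod 2)
    (hc : ∀ k : Fin m, c k ≠ 0 → ∃ p : Fin m, IsPivot R p k ∧ p < i)
    (R' : Matrix (Fin m) (Fin m) (ZMod 2))
    (hR' : R' = R.updateCol j (fun r => R r j + ∑ k : Fin m, c k * R r k)) :
    IsPivot R' i j ∧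
    (Reduced R' → ∀ p q : Fin m, IsPivot R' p q ↔ IsPivot R p q) := by
  have hcol : ∀ r : Fin m, i ≤ r → R' r j = R r j := by
    intro r hr
    rw [hR', updateCol_apply, if_pos rfl]
    have hsum : ∑ k : Fin m, c k * R r k = 0 := by
      apply Finset.sum_eq_zero
      intro k _
      by_cases hk : c k = 0
      · rw [hk, zero_mul]
      · obtain ⟨p, hp, hpi⟩ := hc k hk
        rw [hp.2 r (lt_of_lt_of_le hpi hr), mul_zero]
    rw [hsum, add_zero]
  have hpiv' : IsPivot R' i j := by
    constructor
    · rw [hcol i le_rfl]; exact hpiv.1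
    · intro r hr
      rw [hcol r hr.le]
      exact hpiv.2 r hr
  refine ⟨hpiv', fun _ p q => ?_⟩
  by_cases hq : q = j
  · subst hq
    constructor
    · intro h
      have : p = i := pivot_unique h hpiv'
      subst this; exact hpiv
    · intro h
      have : p = i := pivot_unique h hpiv
      subst this; exact hpiv'
  · have heq : ∀ r : Fin m, R' r q = R r q := by
      intro r; rw [hR', updateCol_apply, if_neg hq]
    unfold IsPivot
    simp only [heq]
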